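/- ω₁ does not satisfy the rainbow partition relation ω₁ →^poly (4)^3_{<ω-bdd}: there exists a coloring g : [ω₁]^3 → ω₁ such that every color class of g is finite, but no 4-element subset of ω₁ is rainbow for g. -/

import Mathlib

open Ordinal Set Cardinal

universe u v

theorem omega1_not_poly_four_triples_aux :
    ∃ g : Ordinal.{u} → Ordinal.{u} → Ordinal.{u} → Ordinal.{v},
      (∀ α β γ, α < β → β < γ → γ < (Cardinal.aleph 1).ord →
        g α β γ < (Cardinal.aleph 1).ord) ∧
      (∀ ξ : Ordinal.{v},
        {t : Ordinal.{u} × Ordinal.{u} × Ordinal.{u} |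
          t.1 < t.2.1 ∧ t.2.1 < t.2.2 ∧ t.2.2 < (Cardinal.aleph 1).ord ∧
          g t.1 t.2.1 t.2.2 = ξ}.Finite) ∧
      (∀ α₀ α₁ α₂ α₃, α₀ < α₁ → α₁ < α₂ → α₂ < α₃ →
        α₃ < (Cardinal.aleph 1).ord →
        ¬ ([g α₀ α₁ α₂, g α₀ α₁ α₃, g α₀ α₂ α₃, g α₁ α₂ α₃].Nodup)) := by
  classical
  -- the two copies of ω₁ agree in the common universe
  have hord : Ordinal.lift.{v,u} ((Cardinal.aleph 1).ord) =
      Ordinal.lift.{u,v} ((Cardinal.aleph 1).ord) := by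
    rw [lift_ord, lift_ord, lift_aleph, lift_aleph]
    simp
  -- transfer ordinals below ω₁ from universe u to universe v
  have hdown : ∀ x : Ordinal.{u}, ∃ y : Ordinal.{v},
      x < (Cardinal.aleph 1).ord →
        Ordinal.lift.{u} y = Ordinal.lift.{v} x ∧ y < (Cardinal.aleph 1).ord := by
    intro x
    by_cases hx : x < (Cardinal.aleph 1).ord
    · have h1 : Ordinal.lift.{v} x < Ordinal.lift.{u,v} ((Cardinal.aleph 1).ord) := by
        rw [← hord]; exact Ordinal.lift_lt.2 hx
      obtain ⟨y, hy⟩ := Ordinal.mem_range_lift_of_le h1.le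
      exact ⟨y, fun _ => ⟨hy, by rw [← Ordinal.lift_lt.{u}, hy]; exact h1⟩⟩
    · exact ⟨0, fun h => absurd h hx⟩
  choose e he using hdown
  have e_inj : ∀ x x', x < (Cardinal.aleph 1).ord → x' < (Cardinal.aleph 1).ord →
      e x = e x' → x = x' := by
    intro x x' hx hx' hee
    have := ((he x hx).1.symm.trans (by rw [hee])).trans (he x' hx').1
    exact Ordinal.lift_inj.mp this
  -- choose injections into ℕ for each countable ordinal
  have key : ∀ γ : Ordinal.{u}, ∃ f : {δ : Ordinal.{u} // δ < γ} → ℕ,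
      γ < (Cardinal.aleph 1).ord → Function.Injective f := by
    intro γ
    by_cases h : γ < (Cardinal.aleph 1).ord
    · have hc : #{δ : Ordinal.{u} // δ < γ} ≤ ℵ₀ := by
        have h1 : #(Iio γ) = Cardinal.lift.{u+1} γ.card := Ordinal.mk_Iio_ordinal γ
        have h2 : γ.card < ℵ₁ := (lt_ord).1 h
        have h3 : γ.card ≤ ℵ₀ := by
          rwa [← succ_aleph0, Order.lt_succ_iff] at h2
        calc #{δ : Ordinal.{u} // δ < γ} = Cardinal.lift.{u+1} γ.card := h1
          _ ≤ Cardinal.lift.{u+1} ℵ₀ := lift_le.2 h3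
          _ = ℵ₀ := by simp
      have : Countable {δ : Ordinal.{u} // δ < γ} := mk_le_aleph0_iff.1 hc
      obtain ⟨f, hf⟩ := countable_iff_exists_injective _ |>.1 this
      exact ⟨f, fun _ => hf⟩
    · exact ⟨fun _ => 0, fun h' => absurd h' h⟩
  choose f hf using key
  -- the coloring
  set a : Ordinal.{u} → Ordinal.{u} → ℕ :=
    fun δ γ => if h : δ < γ then f γ ⟨δ, h⟩ else 0 with ha
  -- every code is below ω₁
  have hcode_lt : ∀ γ : Ordinal.{u}, γ < (Cardinal.aleph 1).ord → ∀ n : ℕ,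
      ω * γ + (n : Ordinal) < (Cardinal.aleph 1).ord := by
    intro γ hγ n
    rw [lt_ord, card_add, card_mul, card_omega0, card_nat]
    have hγc : γ.card ≤ ℵ₀ := by
      rw [← Order.lt_succ_iff, succ_aleph0, ← lt_ord]; exact hγ
    calc ℵ₀ * γ.card + (n : Cardinal)
        ≤ ℵ₀ * ℵ₀ + ℵ₀ :=
          add_le_add (mul_le_mul_right hγc _) (nat_lt_aleph0 _).le
      _ = ℵ₀ := by simp
      _ < ℵ₁ := aleph0_lt_aleph_one
  refine ⟨fun α β γ => e (ω * γ + ((max (a α γ) (a β γ) : ℕ) : Ordinal)),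
    ?_, ?_, ?_⟩
  · intro α β γ _ _ hγ
    exact (he _ (hcode_lt γ hγ _)).2
  · -- color classes finite
    intro ξ
    dsimp only
    rcases Set.eq_empty_or_nonempty {t : Ordinal.{u} × Ordinal.{u} × Ordinal.{u} |
        t.1 < t.2.1 ∧ t.2.1 < t.2.2 ∧ t.2.2 < (Cardinal.aleph 1).ord ∧
        e (ω * t.2.2 + ((max (a t.1 t.2.2) (a t.2.1 t.2.2) : ℕ) : Ordinal)) = ξ}
      with hE | hNE
    · rw [hE]; exact Set.finite_empty
    obtain ⟨⟨α₀, β₀, γ₀⟩, hαβ₀, hβγ₀, hγ₀, hcode₀⟩ := hNE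
    simp only at hcode₀
    set n₀ : ℕ := max (a α₀ γ₀) (a β₀ γ₀) with hn₀
    -- coding injectivity
    have code_inj : ∀ (γ : Ordinal.{u}), γ < (Cardinal.aleph 1).ord → ∀ (n : ℕ),
        e (ω * γ + (n : Ordinal)) = ξ → γ = γ₀ ∧ n = n₀ := by
      intro γ hγ n hcode'
      have hcode : ω * γ + (n : Ordinal) = ω * γ₀ + (n₀ : Ordinal) :=
        e_inj _ _ (hcode_lt γ hγ n) (hcode_lt γ₀ hγ₀ n₀)
          (hcode'.trans hcode₀.symm)
      have hkey : γ = γ₀ := by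
        by_contra hne
        rcases lt_or_gt_of_ne hne with hlt | hlt
        · have : ω * γ + (n : Ordinal) < ω * γ₀ + (n₀ : Ordinal) := by
            calc ω * γ + (n : Ordinal) < ω * γ + ω :=
                  add_lt_add_right (nat_lt_omega0 n) _
              _ = ω * Order.succ γ := (mul_succ ω γ).symm
              _ ≤ ω * γ₀ := mul_le_mul_right (Order.succ_le_of_lt hlt) ω
              _ ≤ ω * γ₀ + (n₀ : Ordinal) := le_self_add
          rw [hcode] at this; exact lt_irrefl _ this
        · have : ω * γ₀ + (n₀ : Ordinal) < ω * γ + (n : Ordinal) := by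
            calc ω * γ₀ + (n₀ : Ordinal) < ω * γ₀ + ω :=
                  add_lt_add_right (nat_lt_omega0 n₀) _
              _ = ω * Order.succ γ₀ := (mul_succ ω γ₀).symm
              _ ≤ ω * γ := mul_le_mul_right (Order.succ_le_of_lt hlt) ω
              _ ≤ ω * γ + (n : Ordinal) := le_self_add
          rw [← hcode] at this; exact lt_irrefl _ this
      subst hkey
      have hnn : (n : Ordinal) = (n₀ : Ordinal) := by
        exact add_left_cancel (a := ω * γ) hcode
      exact ⟨rfl, by exact_mod_cast hnn⟩
    -- the finite set containing all coordinates
    have hS : {δ : Ordinal.{u} | δ < γ₀ ∧ a δ γ₀ ≤ n₀}.Finite := by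
      have hinj : Function.Injective (f γ₀) := hf γ₀ hγ₀
      have : {δ : Ordinal.{u} | δ < γ₀ ∧ a δ γ₀ ≤ n₀} ⊆
          (fun x : {δ : Ordinal.{u} // δ < γ₀} => (x : Ordinal)) ''
            ((f γ₀) ⁻¹' (Set.Iic n₀)) := by
        rintro δ ⟨hδ, hδn⟩
        refine ⟨⟨δ, hδ⟩, ?_, rfl⟩
        simpa [ha, hδ] using hδn
      refine Set.Finite.subset (Set.Finite.image _ ?_) this
      exact Set.Finite.preimage hinj.injOn (Set.finite_Iic n₀)
    refine Set.Finite.subset ((hS.prod (hS.prod (Set.finite_singleton γ₀)))) ?_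
    rintro ⟨α, β, γ⟩ ⟨h1, h2, h3, h4⟩
    simp only at h4
    obtain ⟨hγ, hn⟩ := code_inj γ h3 _ h4
    subst hγ
    have hα : a α γ ≤ n₀ := by rw [← hn]; exact le_max_left _ _
    have hβ : a β γ ≤ n₀ := by rw [← hn]; exact le_max_right _ _
    exact ⟨⟨lt_trans h1 h2, hα⟩, ⟨h2, hβ⟩, rfl⟩
  · -- no rainbow 4-set
    intro α₀ α₁ α₂ α₃ h01 h12 h23 h3
    dsimp only
    intro hnodup
    set n₀ := a α₀ α₃
    set n₁ := a α₁ α₃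
    set n₂ := a α₂ α₃
    simp only [List.nodup_cons, List.mem_cons, List.not_mem_nil, or_false,
      List.mem_singleton, List.nodup_nil, and_true, not_or] at hnodup
    obtain ⟨⟨-, -, -⟩, ⟨h5, h6⟩, h7, -⟩ := hnodup
    have e5 : max n₀ n₁ ≠ max n₀ n₂ := fun h => h5 (by rw [h])
    have e6 : max n₀ n₁ ≠ max n₁ n₂ := fun h => h6 (by rw [h])
    have e7 : max n₀ n₂ ≠ max n₁ n₂ := fun h => h7 (by rw [h])
    omega

/-- `ω₁ ↛^poly (4)³_{<ω-bdd}`: there is a coloring of triples from `ω₁` with all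
color classes finite such that no 4-element subset of `ω₁` is rainbow. -/
theorem omega1_not_poly_four_triples :
    ∃ g : Ordinal → Ordinal → Ordinal → Ordinal,
      -- g maps triples from ω₁ into ω₁ :
      (∀ α β γ, α < β → β < γ → γ < (Cardinal.aleph 1).ord →
        g α β γ < (Cardinal.aleph 1).ord) ∧
      -- every color class is finite :
      (∀ ξ : Ordinal,
        {t : Ordinal × Ordinal × Ordinal |
          t.1 < t.2.1 ∧ t.2.1 < t.2.2 ∧ t.2.2 < (Cardinal.aleph 1).ord ∧
          g t.1 t.2.1 t.2.2 = ξ}.Finite) ∧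
      -- no 4-element subset is rainbow: among the four triples from
      -- α₀ < α₁ < α₂ < α₃ two distinct ones get the same color :
      (∀ α₀ α₁ α₂ α₃, α₀ < α₁ → α₁ < α₂ → α₂ < α₃ →
        α₃ < (Cardinal.aleph 1).ord →
        ¬ ([g α₀ α₁ α₂, g α₀ α₁ α₃, g α₀ α₂ α₃, g α₁ α₂ α₃].Nodup)) := by
  exact omega1_not_poly_four_triples_aux
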